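/- Let ρ' ∈ ρℕ_{≥2} and R_ρ^{ρ'}(M) := B_{ρ'/2}(M) ∩ Δ_{ρ'}. If M ⊂ Δ_ρ is chain-connected with step ρ (any two points joined by a finite chain of points of M with consecutive ∞-distances equal to ρ), then R_ρ^{ρ'}(M) is chain-connected with step ρ'. -/

import Mathlib

/-- The grid Δ_ρ = ρℤ^d. -/
def grid (d : ℕ) (ρ : ℝ) : Set (Fin d → ℝ) := {x | ∀ i, ∃ k : ℤ, x i = ρ * k}

/-- Closed r-neighborhood of a set in the ∞-norm (the sup metric on `Fin d → ℝ`). -/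
def nbhd {d : ℕ} (r : ℝ) (M : Set (Fin d → ℝ)) : Set (Fin d → ℝ) :=
  {y | ∃ x ∈ M, dist y x ≤ r}

/-- Chain-connectedness with step ρ. -/
def ChainConnected (d : ℕ) (ρ : ℝ) (M : Set (Fin d → ℝ)) : Prop :=
  ∀ x ∈ M, ∀ z ∈ M, ∃ (n : ℕ) (y : ℕ → (Fin d → ℝ)), y 0 = x ∧ y n = z ∧
    (∀ k ≤ n, y k ∈ M) ∧ ∀ k < n, dist (y (k+1)) (y k) = ρ

/-- Auxiliary: being joinable by a chain of step `ρ'` inside `S`. -/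
def JChain {d : ℕ} (ρ' : ℝ) (S : Set (Fin d → ℝ)) (a b : Fin d → ℝ) : Prop :=
  ∃ (n : ℕ) (y : ℕ → (Fin d → ℝ)), y 0 = a ∧ y n = b ∧
    (∀ k ≤ n, y k ∈ S) ∧ ∀ k < n, dist (y (k+1)) (y k) = ρ'

lemma jchain_refl {d : ℕ} {ρ' : ℝ} {S : Set (Fin d → ℝ)} {a : Fin d → ℝ}
    (ha : a ∈ S) : JChain ρ' S a a :=
  ⟨0, fun _ => a, rfl, rfl, fun _ _ => ha, fun k hk => absurd hk (Nat.not_lt_zero k)⟩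

lemma jchain_cons {d : ℕ} {ρ' : ℝ} {S : Set (Fin d → ℝ)} {a b c : Fin d → ℝ}
    (ha : a ∈ S) (hab : dist b a = ρ') (h : JChain ρ' S b c) : JChain ρ' S a c := by
  obtain ⟨n, y, hy0, hyn, hmem, hstep⟩ := h
  refine ⟨n + 1, fun k => match k with | 0 => a | (k+1) => y k, rfl, hyn, ?_, ?_⟩
  · intro k hk
    match k with
    | 0 => exact ha
    | (k+1) => exact hmem k (Nat.le_of_succ_le_succ hk)
  · intro k hk
    match k with
    | 0 => simpa [hy0] using hab
    | (k+1) => exact hstep k (Nat.lt_of_succ_lt_succ hk)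

lemma jchain_cons' {d : ℕ} {ρ' : ℝ} {S : Set (Fin d → ℝ)} {a b c : Fin d → ℝ}
    (ha : a ∈ S) (hab : a = b ∨ dist b a = ρ') (h : JChain ρ' S b c) : JChain ρ' S a c := by
  rcases hab with rfl | hab
  · exact h
  · exact jchain_cons ha hab h

lemma jchain_trans {d : ℕ} {ρ' : ℝ} {S : Set (Fin d → ℝ)} {a b c : Fin d → ℝ}
    (h1 : JChain ρ' S a b) (h2 : JChain ρ' S b c) : JChain ρ' S a c := by
  obtain ⟨n, y, hy0, hyn, hmem, hstep⟩ := h1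
  subst hy0
  induction n generalizing y with
  | zero => rw [hyn]; exact h2
  | succ n ih =>
    exact jchain_cons (hmem 0 (Nat.zero_le _)) (hstep 0 (Nat.succ_pos n))
      (ih (fun k => y (k+1)) hyn (fun k hk => hmem (k+1) (Nat.succ_le_succ hk))
        (fun k hk => hstep (k+1) (Nat.succ_lt_succ hk)))

/-- Two grid points at distance `< 2ρ'` are equal or at distance exactly `ρ'`. -/
lemma grid_step {d : ℕ} {ρ' : ℝ} (hρ' : 0 < ρ') {u v : Fin d → ℝ}
    (hu : u ∈ grid d ρ') (hv : v ∈ grid d ρ') (hd : dist u v < 2 * ρ') :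
    u = v ∨ dist u v = ρ' := by
  have hcoord : ∀ i, u i = v i ∨ |u i - v i| = ρ' := by
    intro i
    obtain ⟨p, hp⟩ := hu i
    obtain ⟨q, hq⟩ := hv i
    have h1 : |u i - v i| < 2 * ρ' :=
      lt_of_le_of_lt (by simpa [Real.dist_eq] using dist_le_pi_dist u v i) hd
    have h2 : u i - v i = ρ' * (p - q) := by rw [hp, hq]; push_cast; ring
    have h3 : |(p : ℝ) - q| < 2 := by
      have := h1
      rw [h2, abs_mul, abs_of_pos hρ'] at this
      nlinarith [abs_nonneg ((p : ℝ) - q)]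
    have h4 : |p - q| < 2 := by exact_mod_cast (by push_cast; exact h3 : |((p - q : ℤ) : ℝ)| < 2)
    obtain ⟨hl, hr⟩ := abs_lt.mp h4
    have hcase : p - q = -1 ∨ p - q = 0 ∨ p - q = 1 := by omega
    rcases hcase with h | h | h
    · right
      rw [h2]
      have hpq : (p : ℝ) - q = -1 := by exact_mod_cast congrArg (Int.cast : ℤ → ℝ) h
      rw [hpq, abs_mul, abs_of_pos hρ']
      norm_num
    · left
      have : (p : ℝ) - q = 0 := by exact_mod_cast congrArg (Int.cast : ℤ → ℝ) h
      have := h2.trans (by rw [this, mul_zero])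
      linarith
    · right
      rw [h2]
      have hpq : (p : ℝ) - q = 1 := by exact_mod_cast congrArg (Int.cast : ℤ → ℝ) h
      rw [hpq, abs_mul, abs_of_pos hρ']
      norm_num
  by_cases hall : ∀ i, u i = v i
  · exact Or.inl (funext hall)
  · right
    push_neg at hall
    obtain ⟨i0, hi0⟩ := hall
    have hle : dist u v ≤ ρ' := by
      rw [dist_pi_le_iff hρ'.le]
      intro i
      rcases hcoord i with h | h
      · simp [Real.dist_eq, h, hρ'.le]
      · rw [Real.dist_eq, h]
    have hge : ρ' ≤ dist u v := by
      rcases hcoord i0 with h | h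
      · exact absurd h hi0
      · calc ρ' = dist (u i0) (v i0) := by rw [Real.dist_eq, h]
          _ ≤ dist u v := dist_le_pi_dist u v i0
    exact le_antisymm hle hge

theorem restriction_preserves_chainConnected (d : ℕ) (ρ ρ' : ℝ) (hρ : 0 < ρ)
    (m : ℕ) (hm : 2 ≤ m) (hρ' : ρ' = ρ * m)
    (M : Set (Fin d → ℝ)) (hM : M ⊆ grid d ρ) (hMne : M.Nonempty)
    (hcc : ChainConnected d ρ M) :
    ChainConnected d ρ' (nbhd (ρ'/2) M ∩ grid d ρ') := by
  have hρ'pos : 0 < ρ' := by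
    rw [hρ']
    have : (2 : ℝ) ≤ m := by exact_mod_cast hm
    nlinarith
  have hρlt : ρ < ρ' := by
    rw [hρ']
    have : (2 : ℝ) ≤ m := by exact_mod_cast hm
    nlinarith
  set S := nbhd (ρ'/2) M ∩ grid d ρ' with hS
  -- rounding map
  set r : (Fin d → ℝ) → (Fin d → ℝ) := fun v i => ρ' * round (v i / ρ') with hr
  have hr_grid : ∀ v, r v ∈ grid d ρ' := fun v i => ⟨round (v i / ρ'), rfl⟩
  have hr_close : ∀ v, dist (r v) v ≤ ρ' / 2 := by
    intro v
    rw [dist_pi_le_iff (by linarith)]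
    intro i
    rw [Real.dist_eq, hr]
    have h1 : |(v i / ρ') - round (v i / ρ')| ≤ 1 / 2 := abs_sub_round _
    have h2 : ρ' * round (v i / ρ') - v i = ρ' * (round (v i / ρ') - v i / ρ') := by
      field_simp
    rw [h2, abs_mul, abs_of_pos hρ'pos, abs_sub_comm]
    nlinarith
  have hr_mem : ∀ v ∈ M, r v ∈ S := by
    intro v hv
    exact ⟨⟨v, hv, hr_close v⟩, hr_grid v⟩
  -- step between roundings of ρ-close points
  have hstep2 : ∀ u v, dist u v ≤ ρ → r u = r v ∨ dist (r u) (r v) = ρ' := by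
    intro u v huv
    refine grid_step hρ'pos (hr_grid u) (hr_grid v) ?_
    calc dist (r u) (r v) ≤ dist (r u) u + dist u v + dist v (r v) := dist_triangle4 _ _ _ _
      _ ≤ ρ'/2 + ρ + ρ'/2 := by
          gcongr
          · exact hr_close u
          · rw [dist_comm]; exact hr_close v
      _ < 2 * ρ' := by linarith
  -- main chain lemma over M
  have hchain : ∀ (n : ℕ) (w : ℕ → (Fin d → ℝ)), (∀ k ≤ n, w k ∈ M) →
      (∀ k < n, dist (w (k+1)) (w k) = ρ) → JChain ρ' S (r (w 0)) (r (w n)) := by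
    intro n
    induction n with
    | zero => intro w hmem _; exact jchain_refl (hr_mem _ (hmem 0 le_rfl))
    | succ n ih =>
      intro w hmem hstep
      have h1 : JChain ρ' S (r (w 1)) (r (w (n+1))) :=
        ih (fun k => w (k+1)) (fun k hk => hmem (k+1) (Nat.succ_le_succ hk))
          (fun k hk => hstep (k+1) (Nat.succ_lt_succ hk))
      refine jchain_cons' (hr_mem _ (hmem 0 (Nat.zero_le _))) ?_ h1
      rcases hstep2 (w 0) (w 1) (by rw [dist_comm]; exact le_of_eq (hstep 0 (Nat.succ_pos n))) with h | h
      · exact Or.inl h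
      · exact Or.inr (by rw [dist_comm]; exact h)
  -- now the theorem
  intro y hy z hz
  obtain ⟨⟨x, hxM, hyx⟩, hygrid⟩ := hy
  obtain ⟨⟨x', hx'M, hzx'⟩, hzgrid⟩ := hz
  obtain ⟨n, w, hw0, hwn, hwmem, hwstep⟩ := hcc x hxM x' hx'M
  have hJ1 : JChain ρ' S y (r x) := by
    refine jchain_cons' ⟨⟨x, hxM, hyx⟩, hygrid⟩ ?_ (jchain_refl (hr_mem x hxM))
    have hg : y = r x ∨ dist y (r x) = ρ' := by
      refine grid_step hρ'pos hygrid (hr_grid x) ?_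
      calc dist y (r x) ≤ dist y x + dist x (r x) := dist_triangle _ _ _
        _ ≤ ρ'/2 + ρ'/2 := by gcongr; rw [dist_comm]; exact hr_close x
        _ < 2 * ρ' := by linarith
    rcases hg with h | h
    · exact Or.inl h
    · exact Or.inr (by rw [dist_comm]; exact h)
  have hJ2 : JChain ρ' S (r x) (r x') := by
    rw [← hw0, ← hwn]; exact hchain n w hwmem hwstep
  have hJ3 : JChain ρ' S (r x') z := by
    refine jchain_cons' (hr_mem x' hx'M) ?_ (jchain_refl ⟨⟨x', hx'M, hzx'⟩, hzgrid⟩)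
    have hg : r x' = z ∨ dist (r x') z = ρ' := by
      refine grid_step hρ'pos (hr_grid x') hzgrid ?_
      calc dist (r x') z ≤ dist (r x') x' + dist x' z := dist_triangle _ _ _
        _ ≤ ρ'/2 + ρ'/2 := by
            gcongr
            · exact hr_close x'
            · rw [dist_comm]; exact hzx'
        _ < 2 * ρ' := by linarith
    rcases hg with h | h
    · exact Or.inl h
    · exact Or.inr (by rw [dist_comm]; exact h)
  exact jchain_trans hJ1 (jchain_trans hJ2 hJ3)
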